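/- Assume the reward distributions of all $N$ arms have finite $p$th moment with $1 < p \le 2$, and that the sample-mean deviation bound $\Pr(|\overline{\theta}_n(\tau)-\theta_n| \ge \delta) \le C_p \delta^{-p} \tau^{1-p}$ holds with $C_p = (3\sqrt{2})^p p^{p/2}\mathbb{E}[|X(1)-\theta|^p]$. Under the DSEE policy whose exploration sequence includes time $t$ whenever $|\mathcal{A}(t-1)| < v t^{1/p}$ for a constant $v > 0$, the regret satisfies $R_T^{\pi^p}(\mathcal{F}) = O(T^{1/p})$. -/

import Mathlib

open MeasureTheory Real

section AuxLemmas

lemma aux_rank_count (P : ℕ → Prop) [DecidablePred P] :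
    ∀ (c : ℕ) (E : Finset ℕ), E.card = c →
    (E.filter fun s => P ((E.filter (· < s)).card)).card
      = ((Finset.range c).filter P).card := by
  intro c
  induction c with
  | zero =>
    intro E hE
    rw [Finset.card_eq_zero] at hE
    subst hE; simp
  | succ c ih =>
    intro E hE
    have hne : E.Nonempty := by
      rw [← Finset.card_pos, hE]; omega
    obtain ⟨m, hm⟩ : ∃ m, m = E.max' hne := ⟨_, rfl⟩
    have hmE : m ∈ E := hm ▸ E.max'_mem hne
    obtain ⟨E', hE'⟩ : ∃ E', E' = E.erase m := ⟨_, rfl⟩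
    have hmE' : m ∉ E' := hE' ▸ Finset.notMem_erase _ _
    have hins : insert m E' = E := hE' ▸ Finset.insert_erase hmE
    have hcard' : E'.card = c := by
      rw [hE', Finset.card_erase_of_mem hmE, hE]; omega
    have hmax : ∀ x ∈ E, x ≤ m := fun x hx => hm ▸ E.le_max' x hx
    -- rank of elements of E' is same in E and E'
    have hrank : ∀ s ∈ E', (E.filter (· < s)).card = (E'.filter (· < s)).card := by
      intro s hs
      congr 1
      rw [← hins, Finset.filter_insert, if_neg]
      have := hmax s (by rw [← hins]; exact Finset.mem_insert_of_mem hs)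
      omega
    -- rank of m is c
    have hrankm : (E.filter (· < m)).card = c := by
      have h2 : E.filter (· < m) = E' := by
        ext x
        simp only [Finset.mem_filter, hE', Finset.mem_erase]
        constructor
        · rintro ⟨hx, hlt⟩; exact ⟨by omega, hx⟩
        · rintro ⟨hne', hx⟩
          exact ⟨hx, lt_of_le_of_ne (hmax x hx) hne'⟩
      rw [h2, hcard']
    have congrE : (E.filter fun s => P ((E.filter (· < s)).card))
        = E.filter fun s => if s = m then P c else P ((E'.filter (· < s)).card) := by
      apply Finset.filter_congr
      intro s hs
      by_cases hsm : s = m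
      · subst hsm; rw [if_pos rfl, hrankm]
      · rw [if_neg hsm, hrank s (by rw [hE', Finset.mem_erase]; exact ⟨hsm, hs⟩)]
    rw [congrE, ← hins, Finset.filter_insert]
    simp only [eq_self_iff_true, if_true]
    have congr2 : (E'.filter fun s => if s = m then P c else P ((E'.filter (· < s)).card))
        = E'.filter fun s => P ((E'.filter (· < s)).card) := by
      apply Finset.filter_congr
      intro s hs
      rw [if_neg (by rintro rfl; exact hmE' hs)]
    rw [congr2]
    have key2 : ((Finset.range (c+1)).filter P)
        = if P c then insert c ((Finset.range c).filter P)
          else ((Finset.range c).filter P) := by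
      rw [Finset.range_add_one, Finset.filter_insert]
    rw [key2]
    by_cases hPc : P c
    · rw [if_pos hPc, if_pos hPc, Finset.card_insert_of_notMem, Finset.card_insert_of_notMem]
      · rw [ih E' hcard']
      · simp
      · intro h; exact hmE' (Finset.mem_of_mem_filter _ h)
    · rw [if_neg hPc, if_neg hPc, ih E' hcard']

lemma aux_mod_count (N n c : ℕ) (hn : n < N) :
    c / N ≤ ((Finset.range c).filter (· % N = n)).card := by
  have h : (Finset.range (c / N)).card ≤ ((Finset.range c).filter (· % N = n)).card := by
    apply Finset.card_le_card_of_injOn (fun j => j * N + n)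
    · intro j hj
      simp only [Finset.mem_coe, Finset.mem_range] at hj
      simp only [Finset.mem_coe, Finset.mem_filter, Finset.mem_range]
      constructor
      · have h1 : (j + 1) * N ≤ (c / N) * N := Nat.mul_le_mul_right _ hj
        have h3 : (c / N) * N ≤ c := Nat.div_mul_le_self c N
        calc j * N + n < j * N + N := by omega
          _ = (j + 1) * N := by ring
          _ ≤ c := le_trans h1 h3
      · rw [Nat.mul_comm, Nat.mul_add_mod]
        exact Nat.mod_eq_of_lt hn
    · intro a _ b _ hab
      simp only at hab
      have h2 : a * N = b * N := by omega
      exact Nat.eq_of_mul_eq_mul_right (by omega) h2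
  simpa using h


lemma aux_bernoulli (α : ℝ) (hα0 : 0 < α) (hα1 : α ≤ 1) (i : ℕ) :
    α * ((i : ℝ) + 1) ^ (α - 1) ≤ ((i : ℝ) + 1) ^ α - (i : ℝ) ^ α := by
  set t : ℝ := (i : ℝ) + 1 with ht
  have ht0 : (0 : ℝ) < t := by positivity
  have hi0 : (0 : ℝ) ≤ (i : ℝ) := Nat.cast_nonneg i
  have amgm : ((i:ℝ)/t) ^ α * (1:ℝ) ^ (1 - α) ≤ α * ((i:ℝ)/t) + (1 - α) * 1 :=
    Real.geom_mean_le_arith_mean2_weighted hα0.le (by linarith)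
      (by positivity) zero_le_one (by ring)
  rw [Real.one_rpow, mul_one, mul_one] at amgm
  rw [Real.div_rpow hi0 ht0.le] at amgm
  have htpow : (0:ℝ) < t ^ α := Real.rpow_pos_of_pos ht0 α
  have h1 : (i:ℝ) ^ α ≤ (α * ((i:ℝ)/t) + (1 - α)) * t ^ α := by
    rw [← div_le_iff₀ htpow]; exact amgm
  have h2 : t ^ α = t * t ^ (α - 1) := by
    have h := Real.rpow_add ht0 1 (α - 1)
    rw [show (1:ℝ) + (α-1) = α by ring] at h
    rw [h, Real.rpow_one]
  have h3 : (α * ((i:ℝ)/t) + (1 - α)) * t ^ α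
      = α * (i:ℝ) * t ^ (α - 1) + (1 - α) * t ^ α := by
    rw [mul_comm, mul_add]
    congr 1
    · rw [h2]; field_simp
    · ring
  rw [h3] at h1
  have h4 : t ^ α - (α * (i:ℝ) * t ^ (α-1) + (1-α) * t ^ α)
      = α * t ^ (α-1) * (t - i) := by
    rw [h2]; ring
  have h5 : t - (i:ℝ) = 1 := by rw [ht]; ring
  rw [h5, mul_one] at h4
  linarith

lemma aux_sum_rpow (α : ℝ) (hα0 : 0 < α) (hα1 : α ≤ 1) (T : ℕ) :
    ∑ t ∈ Finset.Icc 1 T, (t : ℝ) ^ (α - 1) ≤ (T : ℝ) ^ α / α := by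
  have key : ∑ t ∈ Finset.Icc 1 T, α * (t : ℝ) ^ (α - 1) ≤ (T : ℝ) ^ α := by
    rw [← Finset.Ico_add_one_right_eq_Icc, Finset.sum_Ico_eq_sum_range]
    simp only [Nat.add_sub_cancel]
    have tel : ∑ i ∈ Finset.range T, (((i:ℝ)+1) ^ α - (i:ℝ) ^ α) = (T:ℝ) ^ α := by
      have h := Finset.sum_range_sub (fun i => ((i:ℝ)) ^ α) T
      simp only [Nat.cast_add, Nat.cast_one] at h
      rw [h, Nat.cast_zero, Real.zero_rpow (by linarith)]
      ring
    calc ∑ i ∈ Finset.range T, α * ((1 + i : ℕ) : ℝ) ^ (α - 1)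
        ≤ ∑ i ∈ Finset.range T, (((i:ℝ)+1) ^ α - (i:ℝ) ^ α) := by
          apply Finset.sum_le_sum
          intro i _
          have h := aux_bernoulli α hα0 hα1 i
          have : ((1 + i : ℕ) : ℝ) = (i:ℝ) + 1 := by push_cast; ring
          rw [this]
          exact h
      _ = (T:ℝ) ^ α := tel
  rw [le_div_iff₀ hα0]
  calc (∑ t ∈ Finset.Icc 1 T, (t : ℝ) ^ (α - 1)) * α
      = ∑ t ∈ Finset.Icc 1 T, α * (t : ℝ) ^ (α - 1) := by
        rw [Finset.sum_mul]; apply Finset.sum_congr rfl; intros; ring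
    _ ≤ (T : ℝ) ^ α := key

end AuxLemmas

set_option maxHeartbeats 1600000 in
/-- DSEE sublinear regret for heavy-tailed rewards, `1 < p ≤ 2` (Theorem 3, first case):
with exploration sequence `t ∈ A ↔ |A(t-1)| < v t^(1/p)`, round-robin exploration,
largest-sample-mean exploitation, and the sample-mean deviation bound
`Pr(|θ̄ₙ(τ) - θₙ| ≥ δ) ≤ Cₚ(n) δ^(-p) τ^(1-p)` with
`Cₚ(n) = (3√2)^p p^(p/2) E[|Xₙ - θₙ|^p]`, the regret satisfies `R_T = O(T^(1/p))`. -/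
theorem dsee_regret_heavy_tailed_le_two {Ω : Type*} [MeasurableSpace Ω]
    (ℙ : Measure Ω) [IsProbabilityMeasure ℙ]
    (N : ℕ) (hN : 2 ≤ N) (θ : Fin N → ℝ)
    (σ : Equiv.Perm (Fin N)) (hσ : ∀ i j : Fin N, i ≤ j → θ (σ j) ≤ θ (σ i))
    (Δ : Fin N → ℝ) (hΔ : ∀ n, Δ n = θ (σ ⟨0, by omega⟩) - θ (σ n))
    (hΔ₂ : 0 < Δ ⟨1, by omega⟩)
    (p : ℝ) (hp1 : 1 < p) (hp2 : p ≤ 2)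
    -- p-th central moments of the reward distributions and the deviation constant
    (mom : Fin N → ℝ) (hmom : ∀ n, 0 ≤ mom n)
    (Cp : Fin N → ℝ)
    (hCp : ∀ n, Cp n = (3 * Real.sqrt 2) ^ p * p ^ (p / 2) * mom n)
    (δ : ℝ) (hδ : δ = Δ ⟨1, by omega⟩ / 2)
    (v : ℝ) (hv : 0 < v)
    (A : Set ℕ) [DecidablePred (· ∈ A)]
    (cnt : ℕ → ℕ) (hcnt : ∀ t, cnt t = ((Finset.Icc 1 t).filter (· ∈ A)).card)
    (hA : ∀ t : ℕ, 1 ≤ t → (t ∈ A ↔ (cnt (t - 1) : ℝ) < v * (t : ℝ) ^ ((1 : ℝ) / p)))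
    (pol : ℕ → Ω → Fin N) (hpolmeas : ∀ t, Measurable (pol t))
    (hround : ∀ t ∈ A, ∀ ω, pol t ω = ⟨(cnt t - 1) % N, Nat.mod_lt _ (by omega)⟩)
    (τ : Fin N → ℕ → ℕ)
    (hτ : ∀ n t, τ n t = ((Finset.Icc 1 (t - 1)).filter
      (fun s => s ∈ A ∧ (cnt s - 1) % N = (n : ℕ))).card)
    (θbar : Fin N → ℕ → Ω → ℝ)
    (hdev : ∀ n t, 1 ≤ t → t ∉ A →
      ℙ {ω | δ ≤ |θbar n t ω - θ n|} ≤
        ENNReal.ofReal (Cp n / δ ^ p * (τ n t : ℝ) ^ (1 - p)))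
    (hexploit : ∀ t, 1 ≤ t → t ∉ A → ∀ ω, ∀ n, θbar n t ω ≤ θbar (pol t ω) t ω)
    (R : ℕ → ℝ)
    (hR : ∀ T, R T = T * θ (σ ⟨0, by omega⟩)
      - ∑ t ∈ Finset.Icc 1 T, ∫ ω, θ (pol t ω) ∂ℙ) :
    ∃ C : ℝ, 0 < C ∧ ∀ T : ℕ, 1 ≤ T → R T ≤ C * (T : ℝ) ^ ((1 : ℝ) / p) := by
  
  classical
  have hp0 : (0:ℝ) < p := by linarith
  have hα0 : (0:ℝ) < 1/p := by positivity
  have hα1 : (1:ℝ)/p ≤ 1 := by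
    rw [div_le_one hp0]; linarith
  have hδ0 : 0 < δ := by rw [hδ]; linarith
  set i0 : Fin N := ⟨0, by omega⟩ with hi0
  set i1 : Fin N := ⟨1, by omega⟩ with hi1
  set θstar : ℝ := θ (σ i0) with hθstar
  -- gaps are nonnegative
  have hΔnn : ∀ n, 0 ≤ Δ n := by
    intro n
    rw [hΔ n]
    have : θ (σ n) ≤ θ (σ i0) := hσ i0 n (by simp [hi0, Fin.le_def])
    linarith
  have hθle : ∀ m, θ m ≤ θstar := by
    intro m
    have h := hσ i0 (σ.symm m) (by simp [hi0, Fin.le_def])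
    rwa [Equiv.apply_symm_apply] at h
  -- gap to a strictly suboptimal arm is at least 2δ
  have hgap : ∀ m, θ m < θstar → 2 * δ ≤ θstar - θ m := by
    intro m hm
    have hfix : θ (σ (σ.symm m)) = θ m := by rw [Equiv.apply_symm_apply]
    have hne : σ.symm m ≠ i0 := by
      intro h
      rw [h] at hfix
      rw [← hθstar] at hfix
      linarith
    have h1le : i1 ≤ σ.symm m := by
      rw [Fin.le_def]
      have : (σ.symm m).val ≠ 0 := by
        intro h
        apply hne
        apply Fin.ext
        simpa [hi0] using h
      simp [hi1]; omega
    have hmono := hσ i1 (σ.symm m) h1le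
    rw [hfix] at hmono
    have hΔ1 := hΔ i1
    linarith [hδ, hΔ1, hmono]
  set B : ℝ := ∑ n, Δ n with hB
  have hB0 : 0 ≤ B := Finset.sum_nonneg fun n _ => hΔnn n
  have hgapB : ∀ m, θstar - θ m ≤ B := by
    intro m
    have h1 : θstar - θ m = Δ (σ.symm m) := by
      rw [hΔ (σ.symm m), Equiv.apply_symm_apply]
    rw [h1, hB]
    exact Finset.single_le_sum (fun i _ => hΔnn i) (Finset.mem_univ _)
  -- integrability
  have hmeasθ : ∀ t, Measurable fun ω => θ (pol t ω) := fun t =>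
    measurable_from_top.comp (hpolmeas t)
  set M : ℝ := ∑ n, |θ n| with hM
  have hint : ∀ t, Integrable (fun ω => θ (pol t ω)) ℙ := by
    intro t
    refine (integrable_const M).mono' (hmeasθ t).aestronglyMeasurable ?_
    filter_upwards with ω
    rw [Real.norm_eq_abs]
    exact Finset.single_le_sum (f := fun n => |θ n|) (fun i _ => abs_nonneg _)
      (Finset.mem_univ _)
  -- regret as a sum of per-step regrets
  have hRT : ∀ T : ℕ, R T = ∑ t ∈ Finset.Icc 1 T, (θstar - ∫ ω, θ (pol t ω) ∂ℙ) := by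
    intro T
    rw [hR T, Finset.sum_sub_distrib, Finset.sum_const, Nat.card_Icc]
    simp only [Nat.add_sub_cancel, nsmul_eq_mul]
  -- per-step regret is at most B
  have hstepB : ∀ t, θstar - ∫ ω, θ (pol t ω) ∂ℙ ≤ B := by
    intro t
    have h1 : (θstar - B) ≤ ∫ ω, θ (pol t ω) ∂ℙ := by
      have := integral_mono (integrable_const (θstar - B)) (hint t)
        (fun ω => by have := hgapB (pol t ω); linarith)
      simpa using this
    linarith
  -- count of exploration times
  have hcntle : ∀ T, 1 ≤ T → (cnt T : ℝ) ≤ v * (T:ℝ) ^ ((1:ℝ)/p) + 1 := by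
    intro T hT
    have hTpos : (0:ℝ) < (T:ℝ) ^ ((1:ℝ)/p) :=
      Real.rpow_pos_of_pos (by exact_mod_cast hT) _
    rcases Finset.eq_empty_or_nonempty ((Finset.Icc 1 T).filter (· ∈ A)) with he | hne
    · rw [hcnt T, he]
      simp only [Finset.card_empty, Nat.cast_zero]
      nlinarith
    · set t := ((Finset.Icc 1 T).filter (· ∈ A)).max' hne with htdef
      have htmem := ((Finset.Icc 1 T).filter (· ∈ A)).max'_mem hne
      rw [Finset.mem_filter, Finset.mem_Icc] at htmem
      obtain ⟨⟨ht1, htT⟩, htA⟩ := htmem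
      have hsplit : (Finset.Icc 1 T).filter (· ∈ A)
          = insert t ((Finset.Icc 1 (t-1)).filter (· ∈ A)) := by
        ext x
        simp only [Finset.mem_filter, Finset.mem_Icc, Finset.mem_insert]
        constructor
        · rintro ⟨⟨hx1, hxT⟩, hxA⟩
          by_cases hxt : x = t
          · exact Or.inl hxt
          · refine Or.inr ⟨⟨hx1, ?_⟩, hxA⟩
            have hle := Finset.le_max' ((Finset.Icc 1 T).filter (· ∈ A)) x (by
              rw [Finset.mem_filter, Finset.mem_Icc]; exact ⟨⟨hx1, hxT⟩, hxA⟩)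
            omega
        · rintro (rfl | ⟨⟨hx1, hxt⟩, hxA⟩)
          · exact ⟨⟨ht1, htT⟩, htA⟩
          · exact ⟨⟨hx1, by omega⟩, hxA⟩
      have hcT : cnt T = cnt (t-1) + 1 := by
        rw [hcnt T, hcnt (t-1), hsplit, Finset.card_insert_of_notMem]
        simp only [Finset.mem_filter, Finset.mem_Icc]
        omega
      have hlt : (cnt (t-1) : ℝ) < v * (t:ℝ) ^ ((1:ℝ)/p) := (hA t ht1).mp htA
      have hmono : v * (t:ℝ) ^ ((1:ℝ)/p) ≤ v * (T:ℝ) ^ ((1:ℝ)/p) := by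
        apply mul_le_mul_of_nonneg_left _ hv.le
        exact Real.rpow_le_rpow (Nat.cast_nonneg _) (by exact_mod_cast htT) hα0.le
      rw [hcT]
      push_cast
      linarith
  -- lower bound on exploration count per arm
  have htauge : ∀ (n : Fin N) (t : ℕ), cnt (t-1) / N ≤ τ n t := by
    intro n t
    have hfilt : (Finset.Icc 1 (t-1)).filter (fun s => s ∈ A ∧ (cnt s - 1) % N = (n:ℕ))
        = ((Finset.Icc 1 (t-1)).filter (· ∈ A)).filter (fun s => (cnt s - 1) % N = (n:ℕ)) := by
      rw [Finset.filter_filter]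
    have hrank : ∀ s ∈ (Finset.Icc 1 (t-1)).filter (· ∈ A),
        cnt s - 1 = (((Finset.Icc 1 (t-1)).filter (· ∈ A)).filter (· < s)).card := by
      intro s hs
      have hs' := hs
      rw [Finset.mem_filter, Finset.mem_Icc] at hs'
      obtain ⟨⟨hs1, hst⟩, hsA⟩ := hs'
      have hins : (Finset.Icc 1 s).filter (· ∈ A)
          = insert s (((Finset.Icc 1 (t-1)).filter (· ∈ A)).filter (· < s)) := by
        ext x
        simp only [Finset.mem_filter, Finset.mem_Icc, Finset.mem_insert]
        constructor
        · rintro ⟨⟨hx1, hxs⟩, hxA⟩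
          by_cases hxx : x = s
          · exact Or.inl hxx
          · exact Or.inr ⟨⟨⟨hx1, by omega⟩, hxA⟩, by omega⟩
        · rintro (rfl | ⟨⟨⟨hx1, hxt⟩, hxA⟩, hxs⟩)
          · exact ⟨⟨hs1, le_refl _⟩, hsA⟩
          · exact ⟨⟨hx1, by omega⟩, hxA⟩
      rw [hcnt s, hins, Finset.card_insert_of_notMem]
      · omega
      · simp only [Finset.mem_filter, Finset.mem_Icc]
        omega
    have hcount : τ n t = ((Finset.range (cnt (t-1))).filter (· % N = (n:ℕ))).card := by
      rw [hτ n t, hfilt]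
      rw [Finset.filter_congr (q := fun s =>
        ((((Finset.Icc 1 (t-1)).filter (· ∈ A)).filter (· < s)).card) % N = (n:ℕ))
        (fun s hs => by rw [hrank s hs])]
      exact aux_rank_count (· % N = (n:ℕ)) (cnt (t-1)) _ (hcnt (t-1)).symm
    rw [hcount]
    exact aux_mod_count N (n:ℕ) (cnt (t-1)) n.isLt
  -- per-step regret bound during exploitation
  set K : ℝ := (v / (2*N)) ^ ((1:ℝ) - p) with hK
  have hK0 : 0 ≤ K := Real.rpow_nonneg (by positivity) _
  have hCp0 : ∀ n, 0 ≤ Cp n / δ ^ p := by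
    intro n
    apply div_nonneg
    · rw [hCp n]
      have h1 : (0:ℝ) ≤ (3 * Real.sqrt 2) ^ p := Real.rpow_nonneg (by positivity) _
      have h2 : (0:ℝ) ≤ p ^ (p/2) := Real.rpow_nonneg hp0.le _
      have := hmom n
      positivity
    · exact (Real.rpow_pos_of_pos hδ0 p).le
  set Csum : ℝ := ∑ n, Cp n / δ ^ p with hCsum
  have hCsum0 : 0 ≤ Csum := Finset.sum_nonneg fun n _ => hCp0 n
  -- tail bound on τ^(1-p)
  have htaupow : ∀ (n : Fin N) (t : ℕ), 1 ≤ t → t ∉ A →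
      ((τ n t : ℝ)) ^ ((1:ℝ) - p) ≤ K * (t:ℝ) ^ ((1:ℝ)/p - 1) := by
    intro n t ht htA
    have htpos : (0:ℝ) < (t:ℝ) := by exact_mod_cast ht
    have htp : (0:ℝ) < (t:ℝ) ^ ((1:ℝ)/p) := Real.rpow_pos_of_pos htpos _
    have hRHS0 : 0 ≤ K * (t:ℝ) ^ ((1:ℝ)/p - 1) :=
      mul_nonneg hK0 (Real.rpow_nonneg htpos.le _)
    rcases Nat.eq_zero_or_pos (τ n t) with h0 | hτ1
    · rw [h0]
      rw [Nat.cast_zero, Real.zero_rpow (fun h => by linarith [h])]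
      exact hRHS0
    · -- 2 N τ ≥ cnt (t-1)
      have hge : v * (t:ℝ) ^ ((1:ℝ)/p) ≤ (cnt (t-1) : ℝ) :=
        le_of_not_gt (fun hlt => htA ((hA t ht).mpr hlt))
      have hnat : cnt (t-1) ≤ 2 * N * τ n t := by
        have h1 := htauge n t
        have h2 := Nat.div_add_mod (cnt (t-1)) N
        have h3 : cnt (t-1) % N < N := Nat.mod_lt _ (by omega)
        have h4 : N * (cnt (t-1) / N) ≤ N * τ n t := Nat.mul_le_mul_left _ h1
        have h5 : N ≤ N * τ n t := Nat.le_mul_of_pos_right _ hτ1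
        have h6 : 2 * N * τ n t = N * τ n t + N * τ n t := by ring
        omega
      have hcast : (cnt (t-1) : ℝ) ≤ 2 * N * (τ n t : ℝ) := by exact_mod_cast hnat
      have hN0 : (0:ℝ) < (N:ℝ) := by exact_mod_cast (by omega : 0 < N)
      have hlow : v / (2*N) * (t:ℝ) ^ ((1:ℝ)/p) ≤ (τ n t : ℝ) := by
        rw [div_mul_eq_mul_div, div_le_iff₀ (by positivity)]
        nlinarith
      have hlowpos : (0:ℝ) < v / (2*N) * (t:ℝ) ^ ((1:ℝ)/p) := by positivity
      have h6 : ((τ n t : ℝ)) ^ ((1:ℝ) - p)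
          ≤ (v / (2*N) * (t:ℝ) ^ ((1:ℝ)/p)) ^ ((1:ℝ) - p) :=
        Real.rpow_le_rpow_of_nonpos hlowpos hlow (by linarith)
      have h7 : (v / (2*N) * (t:ℝ) ^ ((1:ℝ)/p)) ^ ((1:ℝ) - p)
          = K * (t:ℝ) ^ ((1:ℝ)/p - 1) := by
        rw [Real.mul_rpow (by positivity) htp.le, hK]
        congr 1
        rw [← Real.rpow_mul htpos.le]
        congr 1
        field_simp
      rw [h7] at h6
      exact h6
  -- per-step exploitation bound
  have hstepE : ∀ t, 1 ≤ t → t ∉ A →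
      θstar - ∫ ω, θ (pol t ω) ∂ℙ ≤ B * (Csum * (K * (t:ℝ) ^ ((1:ℝ)/p - 1))) := by
    intro t ht htA
    set S : Set Ω := pol t ⁻¹' {m | θ m < θstar} with hS
    have hSmeas : MeasurableSet S := hpolmeas t trivial
    -- step 1: bound per-step regret by B * ℙ(S)
    have hpt : ∀ ω, θstar - θ (pol t ω) ≤ S.indicator (fun _ => B) ω := by
      intro ω
      by_cases hω : ω ∈ S
      · rw [Set.indicator_of_mem hω]
        exact hgapB _
      · rw [Set.indicator_of_notMem hω]
        have : ¬ θ (pol t ω) < θstar := hω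
        linarith
    have hind : Integrable (S.indicator (fun _ => B)) ℙ :=
      (integrable_const B).indicator hSmeas
    have h1 : θstar - ∫ ω, θ (pol t ω) ∂ℙ ≤ B * (ℙ S).toReal := by
      have h2 : ∫ ω, (θstar - θ (pol t ω)) ∂ℙ ≤ ∫ ω, S.indicator (fun _ => B) ω ∂ℙ :=
        integral_mono ((integrable_const θstar).sub (hint t)) hind hpt
      rw [integral_sub (integrable_const θstar) (hint t)] at h2
      simp only [integral_const, Measure.real, measure_univ, ENNReal.toReal_one, one_smul, smul_eq_mul, mul_one] at h2
      rw [integral_indicator_const B hSmeas] at h2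
      rw [smul_eq_mul, mul_comm] at h2
      simp only [mul_one] at h2; rw [mul_comm B]; exact h2
    -- step 2: S is contained in the union of deviation events
    have hsub : S ⊆ ⋃ n : Fin N, {ω | δ ≤ |θbar n t ω - θ n|} := by
      intro ω hω
      rw [Set.mem_iUnion]
      by_cases hdev1 : δ ≤ |θbar (pol t ω) t ω - θ (pol t ω)|
      · exact ⟨pol t ω, hdev1⟩
      · refine ⟨σ i0, ?_⟩
        simp only [Set.mem_setOf_eq]
        by_contra hdev2
        push_neg at hdev1 hdev2
        rw [abs_lt] at hdev1 hdev2
        have hωS : θ (pol t ω) < θstar := hω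
        have hg := hgap _ hωS
        have hex := hexploit t ht htA ω (σ i0)
        have hθσ : θ (σ i0) = θstar := rfl
        linarith [hdev1.1, hdev1.2, hdev2.1, hdev2.2]
    -- step 3: union bound plus the deviation bound
    have h3 : ℙ S ≤ ENNReal.ofReal (∑ n, Cp n / δ ^ p * ((τ n t : ℝ)) ^ (1 - p)) := by
      calc ℙ S ≤ ℙ (⋃ n : Fin N, {ω | δ ≤ |θbar n t ω - θ n|}) := measure_mono hsub
        _ ≤ ∑ n, ℙ {ω | δ ≤ |θbar n t ω - θ n|} := measure_iUnion_fintype_le _ _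
        _ ≤ ∑ n, ENNReal.ofReal (Cp n / δ ^ p * ((τ n t : ℝ)) ^ (1 - p)) :=
            Finset.sum_le_sum (fun n _ => hdev n t ht htA)
        _ = ENNReal.ofReal (∑ n, Cp n / δ ^ p * ((τ n t : ℝ)) ^ (1 - p)) := by
            rw [ENNReal.ofReal_sum_of_nonneg]
            intro n _
            exact mul_nonneg (hCp0 n) (Real.rpow_nonneg (Nat.cast_nonneg _) _)
    have hsum0 : 0 ≤ ∑ n, Cp n / δ ^ p * ((τ n t : ℝ)) ^ (1 - p) :=
      Finset.sum_nonneg fun n _ =>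
        mul_nonneg (hCp0 n) (Real.rpow_nonneg (Nat.cast_nonneg _) _)
    have h4 : (ℙ S).toReal ≤ ∑ n, Cp n / δ ^ p * ((τ n t : ℝ)) ^ (1 - p) :=
      ENNReal.toReal_le_of_le_ofReal hsum0 h3
    -- step 4: bound each summand
    have h5 : ∑ n, Cp n / δ ^ p * ((τ n t : ℝ)) ^ (1 - p)
        ≤ Csum * (K * (t:ℝ) ^ ((1:ℝ)/p - 1)) := by
      rw [hCsum, Finset.sum_mul]
      apply Finset.sum_le_sum
      intro n _
      have := htaupow n t ht htA
      exact mul_le_mul_of_nonneg_left (by simpa using this) (hCp0 n)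
    calc θstar - ∫ ω, θ (pol t ω) ∂ℙ ≤ B * (ℙ S).toReal := h1
      _ ≤ B * (Csum * (K * (t:ℝ) ^ ((1:ℝ)/p - 1))) := by
          apply mul_le_mul_of_nonneg_left _ hB0
          exact le_trans h4 h5
  -- final assembly
  have hC0 : 0 < B * (v+1) + B * Csum * K * p + 1 := by
    have h1 : 0 ≤ B * (v+1) := mul_nonneg hB0 (by linarith)
    have h2 : 0 ≤ B * Csum * K * p :=
      mul_nonneg (mul_nonneg (mul_nonneg hB0 hCsum0) hK0) hp0.le
    linarith
  refine ⟨B * (v+1) + B * Csum * K * p + 1, hC0, ?_⟩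
  intro T hT
  have hT1 : (1:ℝ) ≤ (T:ℝ) ^ ((1:ℝ)/p) :=
    Real.one_le_rpow (by exact_mod_cast hT) hα0.le
  have hTnn : (0:ℝ) ≤ (T:ℝ) ^ ((1:ℝ)/p) := by linarith
  set D : ℝ := B * Csum * K with hD
  have hD0 : 0 ≤ D := mul_nonneg (mul_nonneg hB0 hCsum0) hK0
  rw [hRT T]
  rw [← Finset.sum_filter_add_sum_filter_not (Finset.Icc 1 T) (· ∈ A)]
  have hpart1 : ∑ t ∈ (Finset.Icc 1 T).filter (· ∈ A),
      (θstar - ∫ ω, θ (pol t ω) ∂ℙ) ≤ B * (v * (T:ℝ) ^ ((1:ℝ)/p) + 1) := by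
    calc ∑ t ∈ (Finset.Icc 1 T).filter (· ∈ A), (θstar - ∫ ω, θ (pol t ω) ∂ℙ)
        ≤ ∑ _t ∈ (Finset.Icc 1 T).filter (· ∈ A), B :=
          Finset.sum_le_sum fun t _ => hstepB t
      _ = (cnt T : ℝ) * B := by
          rw [Finset.sum_const, hcnt T, nsmul_eq_mul]
      _ ≤ (v * (T:ℝ) ^ ((1:ℝ)/p) + 1) * B := by
          apply mul_le_mul_of_nonneg_right (hcntle T hT) hB0
      _ = B * (v * (T:ℝ) ^ ((1:ℝ)/p) + 1) := by ring
  have hpart2 : ∑ t ∈ (Finset.Icc 1 T).filter (· ∉ A),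
      (θstar - ∫ ω, θ (pol t ω) ∂ℙ) ≤ D * (p * (T:ℝ) ^ ((1:ℝ)/p)) := by
    have hsum1 : ∑ t ∈ (Finset.Icc 1 T).filter (· ∉ A),
        (θstar - ∫ ω, θ (pol t ω) ∂ℙ)
        ≤ ∑ t ∈ (Finset.Icc 1 T).filter (· ∉ A), D * (t:ℝ) ^ ((1:ℝ)/p - 1) := by
      apply Finset.sum_le_sum
      intro t htmem
      rw [Finset.mem_filter, Finset.mem_Icc] at htmem
      obtain ⟨⟨ht1, _⟩, htnA⟩ := htmem
      calc θstar - ∫ ω, θ (pol t ω) ∂ℙ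
          ≤ B * (Csum * (K * (t:ℝ) ^ ((1:ℝ)/p - 1))) := hstepE t ht1 htnA
        _ = D * (t:ℝ) ^ ((1:ℝ)/p - 1) := by rw [hD]; ring
    have hsum2 : ∑ t ∈ (Finset.Icc 1 T).filter (· ∉ A), D * (t:ℝ) ^ ((1:ℝ)/p - 1)
        ≤ ∑ t ∈ Finset.Icc 1 T, D * (t:ℝ) ^ ((1:ℝ)/p - 1) := by
      apply Finset.sum_le_sum_of_subset_of_nonneg (Finset.filter_subset _ _)
      intro t _ _
      exact mul_nonneg hD0 (Real.rpow_nonneg (Nat.cast_nonneg _) _)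
    have hsum3 : ∑ t ∈ Finset.Icc 1 T, D * (t:ℝ) ^ ((1:ℝ)/p - 1)
        ≤ D * ((T:ℝ) ^ ((1:ℝ)/p) / ((1:ℝ)/p)) := by
      rw [← Finset.mul_sum]
      exact mul_le_mul_of_nonneg_left (aux_sum_rpow ((1:ℝ)/p) hα0 hα1 T) hD0
    have hdivp : (T:ℝ) ^ ((1:ℝ)/p) / ((1:ℝ)/p) = p * (T:ℝ) ^ ((1:ℝ)/p) := by
      field_simp
    rw [hdivp] at hsum3
    linarith
  have hfin : B * (v * (T:ℝ) ^ ((1:ℝ)/p) + 1) + D * (p * (T:ℝ) ^ ((1:ℝ)/p))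
      ≤ (B * (v+1) + D * p + 1) * (T:ℝ) ^ ((1:ℝ)/p) := by
    have hBv : B * (v * (T:ℝ) ^ ((1:ℝ)/p) + 1) ≤ B * (v+1) * (T:ℝ) ^ ((1:ℝ)/p) := by
      have : B * 1 ≤ B * (T:ℝ) ^ ((1:ℝ)/p) := mul_le_mul_of_nonneg_left hT1 hB0
      nlinarith
    have hDp : D * (p * (T:ℝ) ^ ((1:ℝ)/p)) = (D * p) * (T:ℝ) ^ ((1:ℝ)/p) := by ring
    nlinarith
  linarith
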